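/- Let A be a unital ring such that for every 2-torsion free unital A-bimodule M, every Jordan derivation D : A → M is a derivation. Then for every 2-torsion free A-bimodule M (not necessarily unital), every Jordan derivation D : A → M is a derivation. -/

import Mathlib

/-- A (not necessarily unital) bimodule structure of a ring `A` on an
additive group `M`, given by a left action `l` and a right action `r`. -/
structure RingBimod (A M : Type*) [Ring A] [AddCommGroup M] where
  l : A → M → M
  r : M → A → M
  l_add : ∀ a m₁ m₂, l a (m₁ + m₂) = l a m₁ + l a m₂
  add_l : ∀ a₁ a₂ m, l (a₁ + a₂) m = l a₁ m + l a₂ m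
  r_add : ∀ m₁ m₂ a, r (m₁ + m₂) a = r m₁ a + r m₂ a
  add_r : ∀ m a₁ a₂, r m (a₁ + a₂) = r m a₁ + r m a₂
  mul_l : ∀ a₁ a₂ m, l (a₁ * a₂) m = l a₁ (l a₂ m)
  r_mul : ∀ m a₁ a₂, r m (a₁ * a₂) = r (r m a₁) a₂
  l_r : ∀ a₁ m a₂, l a₁ (r m a₂) = r (l a₁ m) a₂

universe u

namespace RingBimodAux

variable {A M : Type*} [Ring A] [AddCommGroup M] (bm : RingBimod A M)

theorem l_zero (c : A) : bm.l c 0 = 0 := by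
  have h := bm.l_add c 0 0
  rw [add_zero] at h
  exact left_eq_add.mp h

theorem r_zero (c : A) : bm.r 0 c = 0 := by
  have h := bm.r_add 0 0 c
  rw [add_zero] at h
  exact left_eq_add.mp h

theorem l_neg (c : A) (m : M) : bm.l c (-m) = -bm.l c m := by
  have h : bm.l c m + bm.l c (-m) = 0 := by
    rw [← bm.l_add, add_neg_cancel, l_zero]
  exact eq_neg_of_add_eq_zero_right h

theorem r_neg (m : M) (c : A) : bm.r (-m) c = -bm.r m c := by
  have h : bm.r m c + bm.r (-m) c = 0 := by
    rw [← bm.r_add, add_neg_cancel, r_zero]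
  exact eq_neg_of_add_eq_zero_right h

/-- The unital Peirce corner of a bimodule. -/
def unitSub : AddSubgroup M where
  carrier := {m | bm.l 1 m = m ∧ bm.r m 1 = m}
  add_mem' := by
    rintro x y ⟨hx1, hx2⟩ ⟨hy1, hy2⟩
    exact ⟨by rw [bm.l_add, hx1, hy1], by rw [bm.r_add, hx2, hy2]⟩
  zero_mem' := ⟨l_zero bm 1, r_zero bm 1⟩
  neg_mem' := by
    rintro x ⟨hx1, hx2⟩
    exact ⟨by rw [l_neg, hx1], by rw [r_neg, hx2]⟩

theorem mem1 {m : M} (hm : m ∈ unitSub bm) : bm.l 1 m = m := hm.1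
theorem mem2 {m : M} (hm : m ∈ unitSub bm) : bm.r m 1 = m := hm.2

/-- The induced bimodule structure on the unital corner. -/
def unitBimod : RingBimod A (unitSub bm) where
  l c m := ⟨bm.l c m.1, by
    constructor
    · rw [← bm.mul_l, one_mul]
    · rw [← bm.l_r, mem2 bm m.2]⟩
  r m c := ⟨bm.r m.1 c, by
    constructor
    · rw [bm.l_r, mem1 bm m.2]
    · rw [← bm.r_mul, mul_one]⟩
  l_add c m₁ m₂ := Subtype.ext (by simp [bm.l_add])
  add_l c₁ c₂ m := Subtype.ext (by simp [bm.add_l])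
  r_add m₁ m₂ c := Subtype.ext (by simp [bm.r_add])
  add_r m c₁ c₂ := Subtype.ext (by simp [bm.add_r])
  mul_l c₁ c₂ m := Subtype.ext (bm.mul_l c₁ c₂ m.1)
  r_mul m c₁ c₂ := Subtype.ext (bm.r_mul m.1 c₁ c₂)
  l_r c₁ m c₂ := Subtype.ext (bm.l_r c₁ m.1 c₂)

@[simp] theorem unitBimod_l_val (c : A) (m : unitSub bm) :
    ((unitBimod bm).l c m : M) = bm.l c m := rfl

@[simp] theorem unitBimod_r_val (m : unitSub bm) (c : A) :
    ((unitBimod bm).r m c : M) = bm.r m c := rfl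

end RingBimodAux

open RingBimodAux

theorem stmt9 (A : Type u) [Ring A]
    (h : ∀ (M : Type u) [AddCommGroup M] (bm : RingBimod A M),
      (∀ m : M, m + m = 0 → m = 0) →
      (∀ m : M, bm.l 1 m = m ∧ bm.r m 1 = m) →
      ∀ D : A → M, (∀ a b, D (a + b) = D a + D b) →
      (∀ a b, D (a * b + b * a)
          = bm.r (D a) b + bm.l a (D b) + bm.r (D b) a + bm.l b (D a)) →
      ∀ a b, D (a * b) = bm.r (D a) b + bm.l a (D b)) :
    ∀ (M : Type u) [AddCommGroup M] (bm : RingBimod A M),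
      (∀ m : M, m + m = 0 → m = 0) →
      ∀ D : A → M, (∀ a b, D (a + b) = D a + D b) →
      (∀ a b, D (a * b + b * a)
          = bm.r (D a) b + bm.l a (D b) + bm.r (D b) a + bm.l b (D a)) →
      ∀ a b, D (a * b) = bm.r (D a) b + bm.l a (D b) := by
  intro M _inst bm tf D Dadd DJ
  have cancel : ∀ u v : M, u + u = v + v → u = v := by
    intro u v huv
    have h2 : (u - v) + (u - v) = 0 := by
      have e : (u - v) + (u - v) = (u + u) - (v + v) := by abel
      rw [e, huv, sub_self]
    exact sub_eq_zero.mp (tf _ h2)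
  have Pl : ∀ (c : A) (m : M), bm.l 1 (bm.l c m) = bm.l c m := by
    intro c m; rw [← bm.mul_l, one_mul]
  have lP : ∀ (c : A) (m : M), bm.l c (bm.l 1 m) = bm.l c m := by
    intro c m; rw [← bm.mul_l, mul_one]
  have Qr : ∀ (m : M) (c : A), bm.r (bm.r m c) 1 = bm.r m c := by
    intro m c; rw [← bm.r_mul, mul_one]
  have rQ : ∀ (m : M) (c : A), bm.r (bm.r m 1) c = bm.r m c := by
    intro m c; rw [← bm.r_mul, one_mul]
  -- the "star" identity, from the Jordan property with b = 1
  have star : ∀ c : A, D c + D c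
      = bm.r (D c) 1 + bm.l c (D 1) + bm.r (D 1) c + bm.l 1 (D c) := by
    intro c
    have h1 := DJ c 1
    rw [mul_one, one_mul, Dadd] at h1
    exact h1
  have h11 := DJ 1 1
  rw [one_mul, Dadd] at h11
  have hD1 : D 1 = bm.r (D 1) 1 + bm.l 1 (D 1) := by
    apply cancel
    rw [h11]; abel
  have PQ1 : bm.l 1 (bm.r (D 1) 1) = 0 := by
    have hs := congrArg (bm.l 1) hD1
    rw [bm.l_add, Pl 1 (D 1)] at hs
    exact right_eq_add.mp hs
  have QP1 : bm.r (bm.l 1 (D 1)) 1 = 0 := by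
    rw [← bm.l_r]; exact PQ1
  have zero_l : ∀ c : A, bm.l c (bm.r (D 1) 1) = 0 := by
    intro c
    rw [← lP c (bm.r (D 1) 1), PQ1, l_zero]
  have zero_r : ∀ c : A, bm.r (bm.l 1 (D 1)) c = 0 := by
    intro c
    rw [← rQ (bm.l 1 (D 1)) c, QP1, r_zero]
  -- component identities
  have D10 : ∀ c : A, bm.l 1 (D c) = bm.l 1 (bm.r (D c) 1) + bm.l c (D 1) := by
    intro c
    have hs := congrArg (bm.l 1) (star c)
    simp only [bm.l_add] at hs
    rw [Pl c (D 1), Pl 1 (D c), bm.l_r 1 (D 1) c, zero_r c, add_zero] at hs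
    exact add_right_cancel hs
  have D01 : ∀ c : A, bm.r (D c) 1 = bm.r (D 1) c + bm.l 1 (bm.r (D c) 1) := by
    intro c
    have hs := congrArg (fun m => bm.r m 1) (star c)
    simp only [bm.r_add] at hs
    rw [Qr (D c) 1, Qr (D 1) c, ← bm.l_r c (D 1) 1, zero_l c, add_zero,
      ← bm.l_r 1 (D c) 1, add_assoc] at hs
    exact add_left_cancel hs
  -- the PQ-corner Jordan derivation
  have pqr : ∀ (m : M) (c : A),
      bm.l 1 (bm.r (bm.r m c) 1) = bm.r (bm.l 1 (bm.r m 1)) c := by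
    intro m c
    rw [Qr, bm.l_r, bm.l_r, ← bm.r_mul, one_mul]
  have pql : ∀ (c : A) (m : M),
      bm.l 1 (bm.r (bm.l c m) 1) = bm.l c (bm.l 1 (bm.r m 1)) := by
    intro c m
    rw [bm.l_r 1 (bm.l c m) 1, Pl c m, bm.l_r 1 m 1, bm.l_r c (bm.l 1 m) 1,
      lP c m]
  have hPQ : ∀ x y : A, bm.l 1 (bm.r (D (x*y + y*x)) 1)
      = bm.r (bm.l 1 (bm.r (D x) 1)) y + bm.l x (bm.l 1 (bm.r (D y) 1))
        + bm.r (bm.l 1 (bm.r (D y) 1)) x + bm.l y (bm.l 1 (bm.r (D x) 1)) := by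
    intro x y
    have hs := congrArg (fun m => bm.l 1 (bm.r m 1)) (DJ x y)
    simp only [bm.r_add, bm.l_add] at hs
    rw [pqr (D x) y, pql x (D y), pqr (D y) x, pql y (D x)] at hs
    exact hs
  have memD : ∀ c : A, bm.l 1 (bm.r (D c) 1) ∈ unitSub bm := by
    intro c
    exact ⟨Pl 1 (bm.r (D c) 1), by rw [← bm.l_r, Qr]⟩
  let D11 : A → ↥(unitSub bm) := fun c => ⟨bm.l 1 (bm.r (D c) 1), memD c⟩
  have tf' : ∀ m : ↥(unitSub bm), m + m = 0 → m = 0 := by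
    intro m hm
    apply Subtype.ext
    apply tf
    have := congrArg Subtype.val hm
    simpa using this
  have hu : ∀ m : ↥(unitSub bm),
      (unitBimod bm).l 1 m = m ∧ (unitBimod bm).r m 1 = m := by
    intro m
    exact ⟨Subtype.ext (mem1 bm m.2), Subtype.ext (mem2 bm m.2)⟩
  have dadd11 : ∀ x y : A, D11 (x + y) = D11 x + D11 y := by
    intro x y
    apply Subtype.ext
    show bm.l 1 (bm.r (D (x+y)) 1)
      = ((D11 x + D11 y : ↥(unitSub bm)) : M)
    rw [Dadd, bm.r_add, bm.l_add]
    rfl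
  have djord : ∀ x y : A, D11 (x*y + y*x)
      = (unitBimod bm).r (D11 x) y + (unitBimod bm).l x (D11 y)
        + (unitBimod bm).r (D11 y) x + (unitBimod bm).l y (D11 x) := by
    intro x y
    apply Subtype.ext
    show bm.l 1 (bm.r (D (x*y + y*x)) 1) = _
    have hval : (((unitBimod bm).r (D11 x) y + (unitBimod bm).l x (D11 y)
        + (unitBimod bm).r (D11 y) x + (unitBimod bm).l y (D11 x) : ↥(unitSub bm)) : M)
        = bm.r (bm.l 1 (bm.r (D x) 1)) y + bm.l x (bm.l 1 (bm.r (D y) 1))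
          + bm.r (bm.l 1 (bm.r (D y) 1)) x + bm.l y (bm.l 1 (bm.r (D x) 1)) := rfl
    rw [hval]
    exact hPQ x y
  have key := h (↥(unitSub bm)) (unitBimod bm) tf' hu D11 dadd11 djord
  have PQkey : ∀ x y : A, bm.l 1 (bm.r (D (x*y)) 1)
      = bm.r (bm.l 1 (bm.r (D x) 1)) y + bm.l x (bm.l 1 (bm.r (D y) 1)) := by
    intro x y
    have hs := congrArg Subtype.val (key x y)
    simpa using hs
  intro a b
  have rhs1 : bm.r (D a) b
      = bm.r (D 1) (a*b) + bm.r (bm.l 1 (bm.r (D a) 1)) b := by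
    have hs := congrArg (fun m => bm.r m b) (D01 a)
    simp only [bm.r_add] at hs
    rw [rQ (D a) b, ← bm.r_mul (D 1) a b] at hs
    exact hs
  have rhs2 : bm.l a (D b)
      = bm.l a (bm.l 1 (bm.r (D b) 1)) + bm.l (a*b) (D 1) := by
    have hs := congrArg (bm.l a) (D10 b)
    simp only [bm.l_add] at hs
    rw [lP a (D b), ← bm.mul_l a b (D 1)] at hs
    exact hs
  apply cancel
  rw [star (a*b), D01 (a*b), D10 (a*b), PQkey a b, rhs1, rhs2]
  abel
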